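/- Let J(θ), θ > 0, be the family of self-adjoint Jacobi operators with discrete simple spectrum obtained by multiplying the first diagonal entry q_1 of a fixed Jacobi matrix by θ² and the first off-diagonal entry b_1 by θ. Let λ_k(θ) be an eigenvalue of J(θ) depending analytically on θ, with normalized eigenvector f(θ) satisfying ⟨δ_1, f(θ)⟩ = 1, and let α_k(θ) = ‖f(θ)‖² be the corresponding normalizing constant. Then d/dθ λ_k(θ) = 2λ_k(θ)/(θ α_k(θ)). -/

import Mathlib

noncomputable section

/-- The Hilbert space ℓ²(ℕ) of square-summable complex sequences. -/
abbrev H : Type := lp (fun _ : ℕ => ℂ) 2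

/-- The canonical basis vectors δ_n (0-indexed: `delta 0` is δ₁). -/
def delta (n : ℕ) : H := lp.single 2 n 1

local notation "⟪" x ", " y "⟫" => @inner ℂ _ _ x y

/-- `J` acts as the Jacobi (tridiagonal) matrix with diagonal `q` and
off-diagonal `b` (0-indexed). -/
def IsJacobi (J : H →L[ℂ] H) (q b : ℕ → ℝ) : Prop :=
  ∀ f : H, (J f) 0 = (q 0 : ℂ) * f 0 + (b 0 : ℂ) * f 1 ∧
    ∀ k : ℕ, (J f) (k+1) = (b k : ℂ) * f k + (q (k+1) : ℂ) * f (k+1) + (b (k+1) : ℂ) * f (k+2)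
set_option maxHeartbeats 1000000 in
/-- Derivative of an eigenvalue of the family J(θ) with respect to θ:
dλ_k/dθ = 2λ_k(θ)/(θ α_k(θ)), where α_k(θ) = ‖f(θ)‖² is the normalizing
constant of the eigenvector f(θ) with first component 1. -/
theorem eigenvalue_derivative
    (q b : ℕ → ℝ) (hb : ∀ n, 0 < b n)
    (J : ℝ → H →L[ℂ] H)
    (hsa : ∀ θ : ℝ, 0 < θ → IsSelfAdjoint (J θ))
    (hJac : ∀ θ : ℝ, 0 < θ →
      IsJacobi (J θ) (fun n => if n = 0 then θ ^ 2 * q 0 else q n)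
        (fun n => if n = 0 then θ * b 0 else b n))
    (lam : ℝ → ℝ) (f : ℝ → H)
    (hlam : ∀ θ : ℝ, 0 < θ → DifferentiableAt ℝ lam θ)
    (hf : ∀ θ : ℝ, 0 < θ → J θ (f θ) = (lam θ : ℂ) • f θ)
    (hf1 : ∀ θ : ℝ, 0 < θ → ⟪delta 0, f θ⟫ = 1)
    (hfcont : Continuous f) :
    ∀ θ : ℝ, 0 < θ → deriv lam θ = 2 * lam θ / (θ * ‖f θ‖ ^ 2) := by
  -- first coordinate of f θ is 1
  have h0 : ∀ θ : ℝ, 0 < θ → f θ 0 = 1 := by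
    intro θ hθ
    have := hf1 θ hθ
    simpa [delta, lp.inner_single_left, RCLike.inner_apply] using this
  intro θ hθ
  have hθc : (θ : ℂ) ≠ 0 := by exact_mod_cast hθ.ne'
  have hb0 : (b 0 : ℂ) ≠ 0 := by exact_mod_cast (hb 0).ne'
  -- key identity for θ' > 0
  have key : ∀ θ' : ℝ, 0 < θ' →
      ((lam θ : ℂ) - lam θ') * ⟪f θ', f θ⟫
        = ((θ : ℂ) - θ') * (((θ : ℂ) + θ') * q 0 + (b 0) * (f θ 1)
            + (b 0) * (starRingEnd ℂ) (f θ' 1)) := by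
    intro θ' hθ'
    set u : H := J θ (f θ) - J θ' (f θ) with hu_def
    have hu : u = (((θ : ℂ)^2 - (θ' : ℂ)^2) * q 0 + ((θ : ℂ) - θ') * b 0 * f θ 1) • delta 0
        + (((θ : ℂ) - θ') * b 0) • delta 1 := by
      apply lp.ext
      funext n
      have A := hJac θ hθ (f θ)
      have B := hJac θ' hθ' (f θ)
      match n with
      | 0 =>
        have hA := A.1
        have hB := B.1
        simp only [if_pos rfl] at hA hB
        simp only [hu_def, lp.coeFn_sub, Pi.sub_apply, lp.coeFn_add, Pi.add_apply,
          lp.coeFn_smul, Pi.smul_apply, delta, lp.single_apply, hA, hB, h0 θ hθ,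
          smul_eq_mul]
        norm_num
        ring
      | 1 =>
        have hA := A.2 0
        have hB := B.2 0
        simp only [if_pos rfl, if_neg (Nat.one_ne_zero)] at hA hB
        simp only [hu_def, lp.coeFn_sub, Pi.sub_apply, lp.coeFn_add, Pi.add_apply,
          lp.coeFn_smul, Pi.smul_apply, delta, lp.single_apply, hA, hB, h0 θ hθ,
          smul_eq_mul]
        norm_num
        ring
      | (k+2) =>
        have hA := A.2 (k+1)
        have hB := B.2 (k+1)
        simp only [if_neg (Nat.succ_ne_zero _)] at hA hB
        have hne1 : k + 2 ≠ 1 := by omega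
        have hne0 : k + 2 ≠ 0 := by omega
        simp only [hu_def, lp.coeFn_sub, Pi.sub_apply, lp.coeFn_add, Pi.add_apply,
          lp.coeFn_smul, Pi.smul_apply, delta, lp.single_apply, hA, hB,
          smul_eq_mul, dif_neg hne1, dif_neg hne0, Pi.single_apply, if_neg hne1, if_neg hne0]
        ring
    -- inner products
    have e1 : ⟪f θ', u⟫ = ((lam θ : ℂ) - lam θ') * ⟪f θ', f θ⟫ := by
      have hsym := (hsa θ' hθ').isSymmetric
      have h1 : ⟪f θ', J θ (f θ)⟫ = (lam θ : ℂ) * ⟪f θ', f θ⟫ := by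
        rw [hf θ hθ, inner_smul_right]
      have h2 : ⟪f θ', J θ' (f θ)⟫ = (lam θ' : ℂ) * ⟪f θ', f θ⟫ := by
        have hs : ⟪J θ' (f θ'), f θ⟫ = ⟪f θ', J θ' (f θ)⟫ := hsym (f θ') (f θ)
        rw [← hs, hf θ' hθ', inner_smul_left, Complex.conj_ofReal]
      simp only [hu_def, inner_sub_right, h1, h2]
      ring
    have e2 : ⟪f θ', u⟫ = ((θ : ℂ) - θ') * (((θ : ℂ) + θ') * q 0 + (b 0) * (f θ 1)
        + (b 0) * (starRingEnd ℂ) (f θ' 1)) := by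
      rw [hu]
      simp only [inner_add_right, inner_smul_right, delta, lp.inner_single_right,
        RCLike.inner_apply, map_one, mul_one, h0 θ' hθ']
      ring
    rw [← e1, e2]
  -- slope identity
  have hslope : ∀ᶠ θ' in nhdsWithin θ {θ}ᶜ,
      ((slope lam θ θ' : ℝ) : ℂ) * ⟪f θ', f θ⟫
        = ((θ : ℂ) + θ') * q 0 + (b 0) * (f θ 1) + (b 0) * (starRingEnd ℂ) (f θ' 1) := by
    filter_upwards [self_mem_nhdsWithin,
      eventually_nhdsWithin_of_eventually_nhds (eventually_gt_nhds hθ)] with θ' hne hθ'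
    have hne' : θ' ≠ θ := hne
    have hsub : ((θ' : ℂ) - θ) ≠ 0 := by
      simpa [sub_eq_zero] using (fun h => hne' (by exact_mod_cast h) : (θ' : ℂ) = θ → False)
    have hk := key θ' hθ'
    rw [slope_def_field]
    push_cast
    field_simp
    linear_combination (-1 : ℂ) * hk
  -- limits
  have hd : Filter.Tendsto (fun θ' => ((slope lam θ θ' : ℝ) : ℂ) * ⟪f θ', f θ⟫)
      (nhdsWithin θ {θ}ᶜ) (nhds (((deriv lam θ : ℝ) : ℂ) * ⟪f θ, f θ⟫)) := by
    have h1 := hasDerivAt_iff_tendsto_slope.mp (hlam θ hθ).hasDerivAt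
    have h2 : Filter.Tendsto (fun θ' => ⟪f θ', f θ⟫) (nhdsWithin θ {θ}ᶜ)
        (nhds ⟪f θ, f θ⟫) :=
      ((hfcont.inner continuous_const).tendsto θ).mono_left nhdsWithin_le_nhds
    exact ((Complex.continuous_ofReal.tendsto _).comp h1).mul h2
  have hg : Filter.Tendsto
      (fun θ' : ℝ => ((θ : ℂ) + θ') * q 0 + (b 0) * (f θ 1) + (b 0) * (starRingEnd ℂ) (f θ' 1))
      (nhdsWithin θ {θ}ᶜ)
      (nhds (((θ : ℂ) + θ) * q 0 + (b 0) * (f θ 1) + (b 0) * (starRingEnd ℂ) (f θ 1))) := by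
    have hcoord : Continuous fun θ' : ℝ => f θ' 1 := by
      have : (fun θ' : ℝ => f θ' 1) = fun θ' : ℝ => ⟪delta 1, f θ'⟫ := by
        funext θ'
        simp [delta, lp.inner_single_left, RCLike.inner_apply]
      rw [this]
      exact continuous_const.inner hfcont
    apply Filter.Tendsto.mono_left _ nhdsWithin_le_nhds
    exact Continuous.tendsto (by continuity) θ
  have main : ((deriv lam θ : ℝ) : ℂ) * ⟪f θ, f θ⟫
      = ((θ : ℂ) + θ) * q 0 + (b 0) * (f θ 1) + (b 0) * (starRingEnd ℂ) (f θ 1) :=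
    tendsto_nhds_unique (hd.congr' hslope) hg
  -- eigen equation at θ, coordinate 0
  have heig : (θ : ℂ)^2 * q 0 + (θ : ℂ) * b 0 * f θ 1 = (lam θ : ℂ) := by
    have hA := (hJac θ hθ (f θ)).1
    simp only [if_pos rfl] at hA
    have hE : (J θ (f θ)) 0 = (lam θ : ℂ) := by
      rw [hf θ hθ]
      simp only [lp.coeFn_smul, Pi.smul_apply, h0 θ hθ, smul_eq_mul, mul_one]
    rw [hA, h0 θ hθ] at hE
    push_cast at hE ⊢
    linear_combination hE
  have hval : f θ 1 = (((lam θ - θ^2 * q 0) / (θ * b 0) : ℝ) : ℂ) := by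
    push_cast
    field_simp
    linear_combination heig
  have hconj : (starRingEnd ℂ) (f θ 1) = f θ 1 := by
    rw [hval, Complex.conj_ofReal]
  -- inner self = norm squared
  have hns : ⟪f θ, f θ⟫ = ((‖f θ‖ ^ 2 : ℝ) : ℂ) := by
    rw [inner_self_eq_norm_sq_to_K]
    norm_cast
  rw [hns, hconj, hval] at main
  have hnorm : ‖f θ‖ ≠ 0 := by
    intro h
    have : f θ = 0 := norm_eq_zero.mp h
    have h1 := h0 θ hθ
    rw [this] at h1
    simp [lp.coeFn_zero] at h1
  -- pass to reals
  have mainR : deriv lam θ * ‖f θ‖ ^ 2 * θ = 2 * lam θ := by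
    have hc : ((deriv lam θ * ‖f θ‖ ^ 2 * θ : ℝ) : ℂ) = ((2 * lam θ : ℝ) : ℂ) := by
      push_cast at main ⊢
      field_simp at main
      apply mul_right_cancel₀ hb0
      linear_combination ((b 0 : ℝ) : ℂ) * main
    exact_mod_cast hc
  have hθ0 : θ ≠ 0 := hθ.ne'
  rw [eq_div_iff (mul_ne_zero hθ0 (pow_ne_zero 2 hnorm))]
  linear_combination mainR
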